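/- If φ : L → L' is a Lie algebra homomorphism from an almost Abelian Lie algebra L = F e₀ ⋉ V, then the image φ(L) is either Abelian or almost Abelian. -/

import Mathlib

variable {F : Type*} [Field F] {V : Type*} [AddCommGroup V] [Module F V]

/-- The almost Abelian Lie algebra `F e₀ ⋉ V` determined by the operator `T = ad_{e₀}|_V`:
the underlying vector space is `F × V`, with bracket `[(t,v),(s,w)] = (0, t • T w - s • T v)`. -/
def AA (F V : Type*) [Field F] [AddCommGroup V] [Module F V] (_T : Module.End F V) : Type _ :=
  F × V

namespace AA

variable {T : Module.End F V}

instance : AddCommGroup (AA F V T) := inferInstanceAs (AddCommGroup (F × V))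
instance : Module F (AA F V T) := inferInstanceAs (Module F (F × V))

instance : LieRing (AA F V T) where
  bracket := fun (x y : F × V) => (((0 : F), x.1 • T y.2 - y.1 • T x.2) : F × V)
  add_lie := by
    rintro ⟨a, u⟩ ⟨b, v⟩ ⟨c, w⟩
    show (((0 : F), (a + b) • T w - c • T (u + v)) : F × V)
      = (((0 : F), a • T w - c • T u) : F × V) + (((0 : F), b • T w - c • T v) : F × V)
    ext
    · simp
    · show (a + b) • T w - c • T (u + v) = (a • T w - c • T u) + (b • T w - c • T v)
      simp only [map_add, smul_add, add_smul]
      module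
  lie_add := by
    rintro ⟨a, u⟩ ⟨b, v⟩ ⟨c, w⟩
    show (((0 : F), a • T (v + w) - (b + c) • T u) : F × V)
      = (((0 : F), a • T v - b • T u) : F × V) + (((0 : F), a • T w - c • T u) : F × V)
    ext
    · simp
    · show a • T (v + w) - (b + c) • T u = (a • T v - b • T u) + (a • T w - c • T u)
      simp only [map_add, smul_add, add_smul]
      module
  lie_self := by
    rintro ⟨a, u⟩
    show (((0 : F), a • T u - a • T u) : F × V) = (0 : F × V)
    ext
    · simp
    · show a • T u - a • T u = (0 : V)
      simp
  leibniz_lie := by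
    rintro ⟨a, u⟩ ⟨b, v⟩ ⟨c, w⟩
    show (((0 : F), a • T (b • T w - c • T v) - (0 : F) • T u) : F × V)
      = (((0 : F), (0 : F) • T w - c • T (a • T v - b • T u)) : F × V)
        + (((0 : F), b • T (a • T w - c • T u) - (0 : F) • T v) : F × V)
    ext
    · simp
    · show a • T (b • T w - c • T v) - (0 : F) • T u
        = ((0 : F) • T w - c • T (a • T v - b • T u)) + (b • T (a • T w - c • T u) - (0 : F) • T v)
      simp only [map_sub, map_smul, zero_smul, smul_sub, smul_smul]
      module

instance : LieAlgebra F (AA F V T) where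
  lie_smul := by
    rintro r ⟨a, u⟩ ⟨b, v⟩
    show (((0 : F), a • T (r • v) - (r • b) • T u) : F × V)
      = r • (((0 : F), a • T v - b • T u) : F × V)
    ext
    · simp
    · show a • T (r • v) - (r • b) • T u = r • (a • T v - b • T u)
      simp only [map_smul, smul_sub, smul_smul, smul_eq_mul]
      module

/-- The distinguished element `e₀`. -/
def e0 (T : Module.End F V) : AA F V T := ((1, 0) : F × V)

/-- The inclusion of the Abelian ideal `V` into `F e₀ ⋉ V`. -/
def incl (T : Module.End F V) : V →ₗ[F] AA F V T where
  toFun v := ((0, v) : F × V)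
  map_add' u v := by
    show (((0 : F), u + v) : F × V) = (((0 : F), u) : F × V) + (((0 : F), v) : F × V)
    ext <;> simp
  map_smul' r v := by
    show (((0 : F), r • v) : F × V) = r • (((0 : F), v) : F × V)
    ext <;> simp

@[simp] lemma bracket_e0_incl (v : V) : ⁅e0 T, incl T v⁆ = incl T (T v) := by
  show (((0 : F), (1 : F) • T v - (0 : F) • T (0 : V)) : F × V) = (((0 : F), T v) : F × V)
  ext <;> simp

end AA


/-- A Lie algebra is almost Abelian if it is non-Abelian and possesses an Abelian ideal of
codimension 1 (as an `F`-vector subspace). -/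
def IsAlmostAbelian (F L : Type*) [Field F] [LieRing L] [LieAlgebra F L] : Prop :=
  ¬IsLieAbelian L ∧
    ∃ I : LieIdeal F L, IsLieAbelian I ∧ Module.rank F (L ⧸ I.toSubmodule) = 1

/-- The image of a Lie algebra homomorphism out of an almost Abelian Lie algebra `F e₀ ⋉ V` is
either Abelian or almost Abelian. -/
theorem stmt11 (F V L' : Type*) [Field F] [AddCommGroup V] [Module F V]
    [LieRing L'] [LieAlgebra F L'] (T : Module.End F V) (hT : T ≠ 0)
    (φ : AA F V T →ₗ⁅F⁆ L') :
    IsLieAbelian φ.range ∨ IsAlmostAbelian F φ.range := by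
  classical
  -- basic computation of the bracket in `AA F V T`
  have hbr : ∀ x y : AA F V T, ⁅x, y⁆ = AA.incl T (x.1 • T y.2 - y.1 • T x.2) := fun _ _ => rfl
  -- elements of the image of `V` bracket to zero in `L'`
  have hVbr : ∀ v w : V, ⁅φ (AA.incl T v), φ (AA.incl T w)⁆ = 0 := by
    intro v w
    rw [← LieHom.map_lie, hbr]
    show φ (AA.incl T ((0 : F) • T w - (0 : F) • T v)) = 0
    rw [zero_smul, zero_smul, sub_zero, map_zero, map_zero φ]
  by_cases hab : IsLieAbelian φ.range
  · exact Or.inl hab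
  right
  refine ⟨hab, ?_⟩
  -- the submodule of the range given by images of elements of `V`
  set S : Submodule F ↥φ.range :=
    Submodule.comap (φ.range : LieSubalgebra F L').toSubmodule.subtype
      (LinearMap.range (φ.toLinearMap ∘ₗ (AA.incl T))) with hSdef
  have memS : ∀ x : ↥φ.range, x ∈ S ↔ ∃ v : V, φ (AA.incl T v) = ↑x := by
    intro x
    simp only [hSdef, Submodule.mem_comap, LinearMap.mem_range, LinearMap.coe_comp,
      Function.comp_apply]
    exact Iff.rfl
  -- it is a Lie ideal
  have hlie : ∀ (x m : ↥φ.range), ⁅x, m⁆ ∈ S := by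
    intro x m
    obtain ⟨a, ha⟩ := (LieHom.mem_range φ _).mp x.2
    obtain ⟨b, hb⟩ := (LieHom.mem_range φ _).mp m.2
    rw [memS]
    refine ⟨a.1 • T b.2 - b.1 • T a.2, ?_⟩
    have : (↑(⁅x, m⁆ : ↥φ.range) : L') = ⁅(↑x : L'), (↑m : L')⁆ := rfl
    rw [this, ← ha, ← hb, ← LieHom.map_lie, hbr]
  set I : LieIdeal F ↥φ.range :=
    { S with lie_mem := fun {x m} _ => hlie x m } with hIdef
  have hIS : I.toSubmodule = S := rfl
  -- `I` is abelian
  have hIab : IsLieAbelian ↥I := by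
    constructor
    intro a b
    obtain ⟨v, hv⟩ := (memS _).mp a.2
    obtain ⟨w, hw⟩ := (memS _).mp b.2
    have : (↑(↑(⁅a, b⁆ : ↥I) : ↥φ.range) : L')
        = ⁅(↑(↑a : ↥φ.range) : L'), (↑(↑b : ↥φ.range) : L')⁆ := rfl
    have hz : (↑(↑(⁅a, b⁆ : ↥I) : ↥φ.range) : L') = 0 := by
      rw [this, ← hv, ← hw, hVbr]
    ext
    exact hz
  refine ⟨I, hIab, ?_⟩
  -- the class of `φ e₀` generates the quotient
  have he0mem : φ (AA.e0 T) ∈ φ.range := ⟨AA.e0 T, rfl⟩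
  set z : ↥φ.range := ⟨φ (AA.e0 T), he0mem⟩ with hzdef
  have hgen : ∀ x : ↥φ.range, ∃ c : F, x - c • z ∈ I.toSubmodule := by
    intro x
    obtain ⟨a, ha⟩ := (LieHom.mem_range φ _).mp x.2
    obtain ⟨t, v⟩ := a
    refine ⟨t, ?_⟩
    rw [hIS, memS]
    refine ⟨v, ?_⟩
    have hdecomp : ((t, v) : AA F V T) = t • AA.e0 T + AA.incl T v := by
      show ((t, v) : F × V) = t • ((1, 0) : F × V) + ((0, v) : F × V)
      ext
      · show t = t * 1 + 0; ring
      · show v = t • (0 : V) + v; simp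
    have hx : (↑x : L') = t • φ (AA.e0 T) + φ (AA.incl T v) := by
      rw [← ha, hdecomp, map_add φ, map_smul φ]
    have hcoe : (↑(x - t • z) : L') = (↑x : L') - t • φ (AA.e0 T) := rfl
    show φ (AA.incl T v) = ↑(x - t • z)
    rw [hcoe, hx]
    abel
  have hq : ∀ y : ↥φ.range ⧸ I.toSubmodule, ∃ c : F,
      c • Submodule.Quotient.mk (p := I.toSubmodule) z = y := by
    intro y
    obtain ⟨x, rfl⟩ := Submodule.Quotient.mk_surjective _ y
    obtain ⟨c, hc⟩ := hgen x
    exact ⟨c, by rw [← Submodule.Quotient.mk_smul, Submodule.Quotient.eq]; simpa using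
      (I.toSubmodule.neg_mem hc)⟩
  have hle : Module.rank F (↥φ.range ⧸ I.toSubmodule) ≤ 1 :=
    rank_le_one_iff.mpr ⟨Submodule.Quotient.mk z, hq⟩
  have hnt : Nontrivial (↥φ.range ⧸ I.toSubmodule) := by
    by_contra h
    rw [not_nontrivial_iff_subsingleton, Submodule.Quotient.subsingleton_iff] at h
    apply hab
    constructor
    intro x y
    have hx : x ∈ S := by rw [← hIS, h]; trivial
    have hy : y ∈ S := by rw [← hIS, h]; trivial
    obtain ⟨v, hv⟩ := (memS _).mp hx
    obtain ⟨w, hw⟩ := (memS _).mp hy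
    have : (↑(⁅x, y⁆ : ↥φ.range) : L') = ⁅(↑x : L'), (↑y : L')⁆ := rfl
    ext
    rw [this, ← hv, ← hw, hVbr]
    rfl
  have hge : (1 : Cardinal) ≤ Module.rank F (↥φ.range ⧸ I.toSubmodule) := by
    rw [Cardinal.one_le_iff_pos]
    exact rank_pos_iff_nontrivial.mpr hnt
  exact le_antisymm hle hge
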